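/- arXiv:1206.1735 — 3 statements merged into one kernel-verified Lean document; each statement's English description precedes it below -/
import Mathlib

section
/- Let A ⊆ B be positive affine semigroups in ℕ^m and K a field. Then K[B] is a finitely generated K[A]-module (with the module structure induced by the inclusion A ⊆ B) if and only if C(A) = C(B). -/
open scoped BigOperators

/-- The coordinatewise cast `ℕ^m → ℤ^m`. -/
def ntz {m : ℕ} (x : Fin m → ℕ) : Fin m → ℤ := fun i => (x i : ℤ)

/-- The coordinatewise cast `ℕ^m → ℚ^m`. -/
def ntq {m : ℕ} (x : Fin m → ℕ) : Fin m → ℚ := fun i => (x i : ℚ)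

/-- `G(S)`: the subgroup of `ℤ^m` generated by an affine semigroup `S ⊆ ℕ^m`. -/
def grp {m : ℕ} (S : AddSubmonoid (Fin m → ℕ)) : AddSubgroup (Fin m → ℤ) :=
  AddSubgroup.closure (ntz '' (S : Set (Fin m → ℕ)))

/-- `C(S)`: the cone in `ℚ^m` generated by `S`, i.e. all nonnegative rational
linear combinations of elements of `S`. -/
def cone {m : ℕ} (S : AddSubmonoid (Fin m → ℕ)) : Set (Fin m → ℚ) :=
  {x | ∃ (n : ℕ) (c : Fin n → ℚ) (v : Fin n → Fin m → ℕ),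
    (∀ i, 0 ≤ c i) ∧ (∀ i, v i ∈ S) ∧ x = ∑ i, c i • ntq (v i)}

/-- `B_A := {x ∈ B : x ∉ B + (A \ {0})}`. -/
def BA {m : ℕ} (A B : AddSubmonoid (Fin m → ℕ)) : Set (Fin m → ℕ) :=
  {x | x ∈ B ∧ ¬ ∃ b ∈ B, ∃ a ∈ A, a ≠ 0 ∧ x = b + a}


section AuxLemmas

variable {m : ℕ}

lemma ntq_inj : Function.Injective (ntq (m := m)) := by
  intro x y h
  funext i
  have := congrFun h i
  simpa [ntq] using this

lemma ntq_nsmul (n : ℕ) (x : Fin m → ℕ) : ntq (n • x) = (n : ℚ) • ntq x := by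
  funext i; simp [ntq]

lemma smul_mem_cone {S : AddSubmonoid (Fin m → ℕ)} {q : ℚ} {x : Fin m → ℚ}
    (hq : 0 ≤ q) (hx : x ∈ cone S) : q • x ∈ cone S := by
  obtain ⟨n, c, v, hc, hv, rfl⟩ := hx
  exact ⟨n, fun i => q * c i, v, fun i => mul_nonneg hq (hc i), hv, by
    rw [Finset.smul_sum]; simp [mul_smul]⟩

lemma zero_mem_cone (S : AddSubmonoid (Fin m → ℕ)) : (0 : Fin m → ℚ) ∈ cone S :=
  ⟨0, ![], ![], by simp, by simp, by simp⟩

lemma add_mem_cone {S : AddSubmonoid (Fin m → ℕ)} {x y : Fin m → ℚ}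
    (hx : x ∈ cone S) (hy : y ∈ cone S) : x + y ∈ cone S := by
  obtain ⟨n, c, v, hc, hv, rfl⟩ := hx
  obtain ⟨n', c', v', hc', hv', rfl⟩ := hy
  refine ⟨n + n', Fin.append c c', Fin.append v v', ?_, ?_, ?_⟩
  · intro i
    refine Fin.addCases (fun l => ?_) (fun r => ?_) i
    · rw [Fin.append_left]; exact hc l
    · rw [Fin.append_right]; exact hc' r
  · intro i
    refine Fin.addCases (fun l => ?_) (fun r => ?_) i
    · rw [Fin.append_left]; exact hv l
    · rw [Fin.append_right]; exact hv' r
  · rw [Fin.sum_univ_add]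
    congr 1 <;> apply Finset.sum_congr rfl <;> intro i _ <;>
      simp [Fin.append_left, Fin.append_right]

lemma ntq_mem_cone {S : AddSubmonoid (Fin m → ℕ)} {s : Fin m → ℕ} (hs : s ∈ S) :
    ntq s ∈ cone S :=
  ⟨1, ![1], ![s], by simp, by simp [hs], by simp⟩

lemma mem_cone_iff {S : AddSubmonoid (Fin m → ℕ)} {b : Fin m → ℕ} :
    ntq b ∈ cone S ↔ ∃ N : ℕ, 0 < N ∧ N • b ∈ S := by
  constructor
  · rintro ⟨n, c, v, hc, hv, hb⟩
    set N : ℕ := ∏ i, (c i).den with hN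
    have hNpos : 0 < N := Finset.prod_pos fun i _ => (c i).pos
    have hden : ∀ i : Fin n, (c i).den ∣ N := fun i => Finset.dvd_prod_of_mem _ (Finset.mem_univ i)
    set nn : Fin n → ℕ := fun i => (c i).num.toNat * (N / (c i).den) with hnn
    have hcast : ∀ i, (nn i : ℚ) = c i * N := by
      intro i
      have h1 : ((c i).num.toNat : ℚ) = ((c i).num : ℚ) := by
        norm_cast
        exact Int.toNat_of_nonneg (Rat.num_nonneg.mpr (hc i))
      have h2 : ((N / (c i).den : ℕ) : ℚ) = (N : ℚ) / ((c i).den : ℚ) :=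
        Nat.cast_div (hden i) (by exact_mod_cast (c i).den_nz)
      have hd : ((c i).den : ℚ) ≠ 0 := by exact_mod_cast (c i).den_nz
      rw [hnn]
      push_cast [h1, h2]
      have h3 : (c i) * ((c i).den : ℚ) = (c i).num := Rat.mul_den_eq_num _
      field_simp
      linear_combination -h3
    refine ⟨N, hNpos, ?_⟩
    have key : ntq (N • b) = ntq (∑ i, nn i • v i) := by
      rw [ntq_nsmul, hb, Finset.smul_sum]
      have : ∀ i : Fin n, (N:ℚ) • (c i • ntq (v i)) = ntq (nn i • v i) := by
        intro i
        rw [ntq_nsmul, hcast i, smul_smul, mul_comm]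
      rw [Finset.sum_congr rfl fun i _ => this i]
      funext j
      simp [ntq]
    have := ntq_inj key
    rw [this]
    exact AddSubmonoid.sum_mem S fun i _ => AddSubmonoid.nsmul_mem S (hv i) _
  · rintro ⟨N, hN, hmem⟩
    have h := smul_mem_cone (q := (N : ℚ)⁻¹) (by positivity) (ntq_mem_cone hmem)
    rwa [ntq_nsmul, inv_smul_smul₀ (by exact_mod_cast hN.ne')] at h

lemma repr_closure {F : Finset (Fin m → ℕ)} {x : Fin m → ℕ}
    (hx : x ∈ AddSubmonoid.closure (F : Set (Fin m → ℕ))) :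
    ∃ μ : (Fin m → ℕ) → ℕ, x = ∑ b ∈ F, μ b • b := by
  classical
  obtain ⟨l, hl, hsum⟩ := AddSubmonoid.exists_multiset_of_mem_closure hx
  refine ⟨fun b => l.count b, ?_⟩
  have h1 : l.sum = ∑ a ∈ l.toFinset, l.count a • a := by
    conv_lhs => rw [← Multiset.map_id l]
    rw [Finset.sum_multiset_map_count]
    simp
  rw [← hsum, h1]
  refine Finset.sum_subset ?_ ?_
  · intro b hb
    exact hl b (Multiset.mem_toFinset.mp hb)
  · intro b _ hb
    simp [Multiset.count_eq_zero_of_notMem (fun h => hb (Multiset.mem_toFinset.mpr h))]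

lemma bwd_finite (K : Type) [Field K] (A B : AddSubmonoid (Fin m → ℕ))
    (hBfg : B.FG) (hAB : A ≤ B) (hco : cone A = cone B) :
    (AddMonoidAlgebra.mapDomainRingHom K (AddSubmonoid.inclusion hAB)).Finite := by
  classical
  set f := AddMonoidAlgebra.mapDomainRingHom K (AddSubmonoid.inclusion hAB) with hf
  obtain ⟨F, hF⟩ := hBfg
  have hFB : ∀ b ∈ F, b ∈ B := fun b hb => hF ▸ AddSubmonoid.subset_closure hb
  have hex : ∀ b ∈ F, ∃ N : ℕ, 0 < N ∧ N • b ∈ A := by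
    intro b hb
    have : ntq b ∈ cone A := by rw [hco]; exact ntq_mem_cone (hFB b hb)
    exact mem_cone_iff.mp this
  choose! d hd1 hd2 using hex
  set Dmax := F.sup d with hD
  let β : {y // y ∈ F} → ↥B := fun b => ⟨↑b, hFB _ b.2⟩
  let Φ : ({y // y ∈ F} → Fin (Dmax + 1)) → AddMonoidAlgebra K ↥B :=
    fun ρ => AddMonoidAlgebra.single (∑ b : {y // y ∈ F}, (ρ b : ℕ) • β b) 1
  letI : Algebra (AddMonoidAlgebra K ↥A) (AddMonoidAlgebra K ↥B) := f.toAlgebra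
  have hsmul : ∀ (p : ↥A) (c : K) (z : AddMonoidAlgebra K ↥B),
      (AddMonoidAlgebra.single p c) • z = f (AddMonoidAlgebra.single p c) * z :=
    fun _ _ _ => rfl
  have hspan : Submodule.span (AddMonoidAlgebra K ↥A) (Set.range Φ) = ⊤ := by
    rw [Submodule.eq_top_iff']
    intro z
    induction z using AddMonoidAlgebra.induction with
    | zero => exact Submodule.zero_mem _
    | single_add x c g hx hc ih =>
      refine Submodule.add_mem _ ?_ ih
      obtain ⟨μ, hμ⟩ := repr_closure (F := F) (x := ↑x) (by rw [hF]; exact x.2)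
      set a : Fin m → ℕ := ∑ b ∈ F, (μ b / d b) • (d b • b) with ha
      have haA : a ∈ A := AddSubmonoid.sum_mem _ fun b hb => AddSubmonoid.nsmul_mem _ (hd2 b hb) _
      set ρ : {y // y ∈ F} → Fin (Dmax + 1) := fun b =>
        ⟨μ ↑b % d ↑b, Nat.lt_succ_of_le ((Nat.mod_lt _ (hd1 _ b.2)).le.trans (Finset.le_sup b.2))⟩
        with hρ
      have hxeq : x = (AddSubmonoid.inclusion hAB ⟨a, haA⟩) +
          ∑ b : {y // y ∈ F}, (ρ b : ℕ) • β b := by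
        apply Subtype.ext
        have hcoe : ((∑ b : {y // y ∈ F}, (ρ b : ℕ) • β b : ↥B) : Fin m → ℕ)
            = ∑ b ∈ F, (μ b % d b) • b := by
          rw [AddSubmonoidClass.coe_finset_sum]
          rw [← Finset.sum_coe_sort F (fun b => (μ b % d b) • b)]
          refine Finset.sum_congr rfl fun b _ => ?_
          simp [hρ, β]
        push_cast [hcoe]
        have h4 : ((AddSubmonoid.inclusion hAB ⟨a, haA⟩ : ↥B) : Fin m → ℕ) = a := rfl
        rw [hμ, h4, ha, ← Finset.sum_add_distrib]
        refine Finset.sum_congr rfl fun b _ => ?_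
        rw [smul_smul, ← add_smul]
        congr 1
        exact (Nat.div_add_mod' _ _).symm
      have key : (AddMonoidAlgebra.single x c : AddMonoidAlgebra K ↥B)
          = (AddMonoidAlgebra.single (⟨a, haA⟩ : ↥A) c) • Φ ρ := by
        rw [hsmul]
        have h5 : f (AddMonoidAlgebra.single (⟨a, haA⟩ : ↥A) c)
            = AddMonoidAlgebra.single (AddSubmonoid.inclusion hAB ⟨a, haA⟩) c :=
          AddMonoidAlgebra.mapDomain_single
        rw [h5]
        show _ = AddMonoidAlgebra.single (AddSubmonoid.inclusion hAB ⟨a, haA⟩) c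
            * AddMonoidAlgebra.single (∑ b : {y // y ∈ F}, (ρ b : ℕ) • β b) (1 : K)
        rw [AddMonoidAlgebra.single_mul_single, mul_one, ← hxeq]
      rw [key]
      exact Submodule.smul_mem _ _ (Submodule.subset_span ⟨ρ, rfl⟩)
  exact Module.Finite.of_fg_top (Submodule.fg_def.mpr ⟨Set.range Φ, Set.finite_range Φ, hspan⟩)

lemma fwd_cone (K : Type) [Field K] (A B : AddSubmonoid (Fin m → ℕ)) (hAB : A ≤ B)
    (h : (AddMonoidAlgebra.mapDomainRingHom K (AddSubmonoid.inclusion hAB)).Finite)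
    (b : Fin m → ℕ) (hb : b ∈ B) : ntq b ∈ cone A := by
  classical
  set f := AddMonoidAlgebra.mapDomainRingHom K (AddSubmonoid.inclusion hAB) with hf
  set bB : ↥B := ⟨b, hb⟩ with hbB
  obtain ⟨p, hmonic, heval⟩ := h.to_isIntegral (AddMonoidAlgebra.single bB (1:K))
  set n := p.natDegree with hn
  have hn0 : n ≠ 0 := by
    intro h0
    have hp1 : p = 1 := hmonic.natDegree_eq_zero.mp h0
    rw [hp1, Polynomial.eval₂_one] at heval
    exact one_ne_zero heval
  have hx : ∀ k : ℕ, (AddMonoidAlgebra.single bB (1:K)) ^ k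
      = AddMonoidAlgebra.single (k • bB) 1 := fun k => by
    rw [AddMonoidAlgebra.single_pow, one_pow]
  rw [Polynomial.eval₂_eq_sum_range, Finset.sum_range_succ, hmonic.coeff_natDegree,
    map_one, one_mul, ← hn, hx n] at heval
  have h2 : ∑ k ∈ Finset.range n, f (p.coeff k) * AddMonoidAlgebra.single (k • bB) (1:K)
      + AddMonoidAlgebra.single (n • bB) (1:K) = 0 := by
    rw [← heval]
    congr 1
    exact Finset.sum_congr rfl fun k _ => by rw [hx k]
  have heq' : ∑ k ∈ Finset.range n, f (p.coeff k) * AddMonoidAlgebra.single (k • bB) (1:K)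
      = - AddMonoidAlgebra.single (n • bB) (1:K) := eq_neg_of_add_eq_zero_left h2
  have happ : ∑ k ∈ Finset.range n,
      (f (p.coeff k) * AddMonoidAlgebra.single (k • bB) (1:K)).coeff (n • bB) = -1 := by
    rw [← Finsupp.finset_sum_apply, ← AddMonoidAlgebra.coeff_sum, heq', AddMonoidAlgebra.coeff_neg, Finsupp.neg_apply,
      AddMonoidAlgebra.coeff_single, Finsupp.single_eq_same]
  have hklem : ∃ k ∈ Finset.range n,
      (f (p.coeff k) * AddMonoidAlgebra.single (k • bB) (1:K)).coeff (n • bB) ≠ 0 := by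
    by_contra hcon
    push_neg at hcon
    rw [Finset.sum_eq_zero hcon] at happ
    exact one_ne_zero (neg_eq_zero.mp happ.symm)
  obtain ⟨k, hkn, hne⟩ := hklem
  rw [Finset.mem_range] at hkn
  have hsup : (n • bB) ∈ (f (p.coeff k) * AddMonoidAlgebra.single (k • bB) (1:K)).coeff.support :=
    Finsupp.mem_support_iff.mpr hne
  have hsub := AddMonoidAlgebra.support_coeff_mul_subset (f (p.coeff k)) (AddMonoidAlgebra.single (k • bB) (1:K))
  have hmem := hsub hsup
  rw [Finset.mem_add] at hmem
  obtain ⟨u, hu, v, hv, huv⟩ := hmem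
  have hvk : v = k • bB := Finset.mem_singleton.mp (Finsupp.support_single_subset hv)
  have hu' : u ∈ ((p.coeff k).coeff.support.image (AddSubmonoid.inclusion hAB)) := by
    rw [hf] at hu
    exact Finsupp.mapDomain_support hu
  obtain ⟨w, _, hw⟩ := Finset.mem_image.mp hu'
  have huA : (u : Fin m → ℕ) ∈ A := by rw [← hw]; exact w.2
  have hcoord : (u : Fin m → ℕ) + k • b = n • b := by
    have := congrArg (Subtype.val) huv
    rw [hvk] at this
    simpa [hbB] using this
  have hfin : (n - k) • b = (u : Fin m → ℕ) := by
    have hsplit : n • b = (n - k) • b + k • b := by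
      rw [← add_nsmul, Nat.sub_add_cancel hkn.le]
    rw [hsplit] at hcoord
    exact (add_right_cancel hcoord).symm
  exact mem_cone_iff.mpr ⟨n - k, Nat.sub_pos_of_lt hkn, hfin ▸ huA⟩

end AuxLemmas

/-- Let `A ⊆ B` be positive affine semigroups in `ℕ^m` and `K` a field.
Then `K[B]` is a finitely generated `K[A]`-module (with the module structure induced
by the inclusion `A ⊆ B`) if and only if `C(A) = C(B)`. -/
theorem stmt1 {m : ℕ} (K : Type) [Field K] (A B : AddSubmonoid (Fin m → ℕ))
    (hAfg : A.FG) (hBfg : B.FG) (hAB : A ≤ B) :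
    letI : Module (AddMonoidAlgebra K A) (AddMonoidAlgebra K B) :=
      Module.compHom (AddMonoidAlgebra K B)
        (AddMonoidAlgebra.mapDomainRingHom K (AddSubmonoid.inclusion hAB))
    Module.Finite (AddMonoidAlgebra K A) (AddMonoidAlgebra K B) ↔ cone A = cone B := by
  constructor
  · intro h
    have hfin : (AddMonoidAlgebra.mapDomainRingHom K (AddSubmonoid.inclusion hAB)).Finite := h
    apply Set.Subset.antisymm
    · rintro x ⟨n, c, v, hc, hv, rfl⟩
      exact ⟨n, c, v, hc, fun i => hAB (hv i), rfl⟩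
    · rintro x ⟨n, c, v, hc, hv, rfl⟩
      exact Finset.sum_induction _ (· ∈ cone A)
        (fun a b ha hb' => add_mem_cone ha hb') (zero_mem_cone A)
        (fun i _ => smul_mem_cone (hc i) (fwd_cone K A B hAB hfin (v i) (hv i)))
  · intro hco
    exact bwd_finite K A B hBfg hAB hco
end

section
/- Let A ⊆ B be positive affine semigroups in ℕ^m with C(A) = C(B), and let g be a coset of G(A) in G(B) with B ∩ g ≠ ∅. Then there exists a shift h ∈ G(B) such that b − h ∈ A for every b ∈ B ∩ g; consequently the set (B ∩ g) − h is contained in A and satisfies ((B ∩ g) − h) + A ⊆ (B ∩ g) − h, i.e., it is the exponent set of a monomial ideal of K[A]. -/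
open scoped BigOperators

open Pointwise

lemma ntz_add {m : ℕ} (x y : Fin m → ℕ) : ntz (x + y) = ntz x + ntz y := by
  funext i; simp [ntz]

def ntzHom {m : ℕ} : (Fin m → ℕ) →+ (Fin m → ℤ) where
  toFun := ntz
  map_zero' := by funext i; simp [ntz]
  map_add' := ntz_add

lemma ntz_mem_grp {m : ℕ} {S : AddSubmonoid (Fin m → ℕ)} {a : Fin m → ℕ} (ha : a ∈ S) :
    ntz a ∈ grp S := AddSubgroup.subset_closure ⟨a, ha, rfl⟩

lemma mem_grp_iff {m : ℕ} (S : AddSubmonoid (Fin m → ℕ)) (x : Fin m → ℤ) :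
    x ∈ grp S ↔ ∃ p ∈ S, ∃ q ∈ S, x = ntz p - ntz q := by
  constructor
  · intro h
    have hS : (ntz '' (S : Set (Fin m → ℕ)))
        = ((S.map ntzHom : AddSubmonoid (Fin m → ℤ)) : Set (Fin m → ℤ)) := rfl
    rw [grp, hS, ← AddSubgroup.mem_toAddSubmonoid, AddSubgroup.closure_toAddSubmonoid] at h
    have hneg : (-((S.map ntzHom : AddSubmonoid (Fin m → ℤ)) : Set (Fin m → ℤ)))
        = ((-(S.map ntzHom) : AddSubmonoid (Fin m → ℤ)) : Set (Fin m → ℤ)) := rfl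
    rw [hneg, AddSubmonoid.closure_union, AddSubmonoid.closure_eq, AddSubmonoid.closure_eq,
      AddSubmonoid.mem_sup] at h
    obtain ⟨y, hy, z, hz, hx⟩ := h
    rw [AddSubmonoid.mem_neg] at hz
    obtain ⟨p, hp, rfl⟩ := hy
    obtain ⟨q, hq, hqz⟩ := hz
    have hz' : z = -(ntzHom q) := by rw [hqz, neg_neg]
    refine ⟨p, hp, q, hq, ?_⟩
    rw [← hx, hz', sub_eq_add_neg]
    rfl
  · rintro ⟨p, hp, q, hq, rfl⟩
    exact sub_mem (ntz_mem_grp hp) (ntz_mem_grp hq)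

lemma mem_cone {m : ℕ} {S : AddSubmonoid (Fin m → ℕ)} {x : Fin m → ℕ} (hx : x ∈ S) :
    ntq x ∈ cone S :=
  ⟨1, fun _ => 1, fun _ => x, fun _ => zero_le_one, fun _ => hx, by simp⟩

lemma exists_nsmul_mem {m : ℕ} (A : AddSubmonoid (Fin m → ℕ)) (x : Fin m → ℕ)
    (hx : ntq x ∈ cone A) : ∃ N : ℕ, 0 < N ∧ N • x ∈ A := by
  obtain ⟨n, c, v, hc, hv, hsum⟩ := hx
  refine ⟨∏ i, (c i).den, Finset.prod_pos (fun i _ => (c i).pos), ?_⟩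
  set N := ∏ i, (c i).den with hN
  have hd : ∀ i : Fin n, ∃ d : ℕ, (N : ℚ) * c i = d := by
    intro i
    obtain ⟨t, ht⟩ := Finset.dvd_prod_of_mem (fun i => (c i).den) (Finset.mem_univ i)
    refine ⟨t * (c i).num.toNat, ?_⟩
    have h1 : (N : ℚ) = ((c i).den : ℚ) * t := by exact_mod_cast ht
    have h2 : ((c i).den : ℚ) * c i = (c i).num := by
      rw [mul_comm]; exact_mod_cast Rat.mul_den_eq_num (c i)
    have h3 : (((c i).num.toNat : ℕ) : ℚ) = ((c i).num : ℚ) := by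
      exact_mod_cast Int.toNat_of_nonneg (Rat.num_nonneg.mpr (hc i))
    calc (N : ℚ) * c i = (t : ℚ) * (((c i).den : ℚ) * c i) := by rw [h1]; ring
    _ = (t : ℚ) * ((c i).num : ℚ) := by rw [h2]
    _ = ((t * (c i).num.toNat : ℕ) : ℚ) := by push_cast [h3]; ring
  choose d hdeq using hd
  have key : N • x = ∑ i, d i • v i := by
    funext j
    have hj := congrFun hsum j
    simp only [ntq, Finset.sum_apply, Pi.smul_apply, smul_eq_mul] at hj
    have hq : ((N * x j : ℕ) : ℚ) = ((∑ i, d i * v i j : ℕ) : ℚ) := by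
      push_cast
      rw [hj, Finset.mul_sum]
      refine Finset.sum_congr rfl (fun i _ => ?_)
      rw [← mul_assoc, hdeq i]
    have h2 : N * x j = ∑ i, d i * v i j := by exact_mod_cast hq
    simp only [Pi.smul_apply, smul_eq_mul, Finset.sum_apply]
    exact h2
  rw [key]
  exact AddSubmonoid.sum_mem A (fun i _ => AddSubmonoid.nsmul_mem A (hv i) (d i))

lemma decomp {m : ℕ} {ι : Type} [Fintype ι] (A : AddSubmonoid (Fin m → ℕ))
    (e : ι → Fin m → ℕ) (N : ℕ) (hN : 0 < N) (he : ∀ i, N • e i ∈ A)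
    (b : Fin m → ℕ) (hb : b ∈ AddSubmonoid.closure (Set.range e)) :
    ∃ a ∈ A, ∃ ρ : ι → ℕ, (∀ i, ρ i < N) ∧ b = a + ∑ i, ρ i • e i := by
  classical
  induction hb using AddSubmonoid.closure_induction with
  | mem x hx =>
      obtain ⟨i, rfl⟩ := hx
      refine ⟨(1 / N) • (N • e i), AddSubmonoid.nsmul_mem A (he i) _,
        fun j => if j = i then 1 % N else 0, ?_, ?_⟩
      · intro j; by_cases h : j = i <;> simp [h, Nat.mod_lt _ hN, hN]
      · have hsum : (∑ j, (if j = i then 1 % N else 0) • e j) = (1 % N) • e i := by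
          rw [Finset.sum_eq_single i] <;> simp +contextual
        rw [hsum, smul_smul, ← add_smul, Nat.div_add_mod', one_smul]
  | zero => exact ⟨0, zero_mem _, 0, fun i => hN, by simp⟩
  | add x y hx hy ihx ihy =>
      obtain ⟨a, ha, ρ, hρ, rfl⟩ := ihx
      obtain ⟨a', ha', ρ', hρ', rfl⟩ := ihy
      refine ⟨a + a' + ∑ j, ((ρ j + ρ' j) / N) • (N • e j),
        add_mem (add_mem ha ha')
          (AddSubmonoid.sum_mem A fun j _ => AddSubmonoid.nsmul_mem A (he j) _),
        fun j => (ρ j + ρ' j) % N, fun j => Nat.mod_lt _ hN, ?_⟩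
      have hsum : (∑ j, ρ j • e j) + ∑ j, ρ' j • e j
          = (∑ j, ((ρ j + ρ' j) / N) • (N • e j)) + ∑ j, ((ρ j + ρ' j) % N) • e j := by
        rw [← Finset.sum_add_distrib, ← Finset.sum_add_distrib]
        refine Finset.sum_congr rfl (fun j _ => ?_)
        rw [← add_smul, smul_smul, ← add_smul, Nat.div_add_mod']
      rw [add_add_add_comm, hsum, ← add_assoc]

/-- Let `A ⊆ B` be positive affine semigroups in `ℕ^m` with `C(A) = C(B)`,
and let `g` be a coset of `G(A)` in `G(B)` with `B ∩ g ≠ ∅`.  Then there is a shift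
`h ∈ G(B)` with `b − h ∈ A` for every `b ∈ B ∩ g`; consequently `(B ∩ g) − h ⊆ A` and
`((B ∩ g) − h) + A ⊆ (B ∩ g) − h`, i.e. it is the exponent set of a monomial ideal
of `K[A]`. -/
theorem stmt3 {m : ℕ} (A B : AddSubmonoid (Fin m → ℕ)) (hAfg : A.FG) (hBfg : B.FG)
    (hAB : A ≤ B) (hcone : cone A = cone B)
    (g : (Fin m → ℤ) ⧸ grp A)
    (hg : ∃ b ∈ B, (QuotientAddGroup.mk (ntz b) : (Fin m → ℤ) ⧸ grp A) = g) :
    ∃ h ∈ grp B,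
      (∀ b ∈ B, (QuotientAddGroup.mk (ntz b) : (Fin m → ℤ) ⧸ grp A) = g →
        ∃ a ∈ A, ntz b - h = ntz a) ∧
      (∀ x ∈ {y : Fin m → ℤ | ∃ b ∈ B,
          (QuotientAddGroup.mk (ntz b) : (Fin m → ℤ) ⧸ grp A) = g ∧ y = ntz b - h},
        ∀ a ∈ A, x + ntz a ∈ {y : Fin m → ℤ | ∃ b ∈ B,
          (QuotientAddGroup.mk (ntz b) : (Fin m → ℤ) ⧸ grp A) = g ∧ y = ntz b - h}) := by
  classical
  obtain ⟨s, hs⟩ := hBfg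
  set ι := {x : Fin m → ℕ // x ∈ s} with hι
  set e : ι → Fin m → ℕ := fun i => (i : Fin m → ℕ) with he
  have hrange : Set.range e = (s : Set (Fin m → ℕ)) := Subtype.range_coe
  have hclos : AddSubmonoid.closure (Set.range e) = B := by rw [hrange, hs]
  -- each generator has a positive multiple in A
  have hgen : ∀ i : ι, ∃ N : ℕ, 0 < N ∧ N • e i ∈ A := by
    intro i
    have hiB : e i ∈ B := by
      rw [← hclos]; exact AddSubmonoid.subset_closure ⟨i, rfl⟩
    have : ntq (e i) ∈ cone A := by rw [hcone]; exact mem_cone hiB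
    exact exists_nsmul_mem A (e i) this
  choose Nf hNfpos hNfmem using hgen
  set N : ℕ := ∏ i, Nf i with hNdef
  have hNpos : 0 < N := Finset.prod_pos (fun i _ => hNfpos i)
  have hNmem : ∀ i : ι, N • e i ∈ A := by
    intro i
    obtain ⟨t, ht⟩ := Finset.dvd_prod_of_mem Nf (Finset.mem_univ i)
    rw [hNdef, ht, mul_comm, mul_smul]
    exact AddSubmonoid.nsmul_mem A (hNfmem i) t
  -- decomposition of B
  have hdec : ∀ b ∈ B, ∃ a ∈ A, ∃ ρ : ι → ℕ, (∀ i, ρ i < N) ∧ b = a + ∑ i, ρ i • e i :=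
    fun b hb => decomp A e N hNpos hNmem b (by rwa [hclos])
  obtain ⟨b₀, hb₀B, hb₀g⟩ := hg
  set Φ : (ι → Fin N) → (Fin m → ℕ) := fun ρ => ∑ i, ((ρ i : ℕ)) • e i with hΦ
  -- choose difference representations for all exponent patterns
  have hpq : ∀ ρ : ι → Fin N, ∃ p ∈ A, ∃ q ∈ A,
      (ntz (Φ ρ) - ntz b₀ ∈ grp A → ntz (Φ ρ) - ntz b₀ = ntz p - ntz q) := by
    intro ρ
    by_cases h : ntz (Φ ρ) - ntz b₀ ∈ grp A
    · obtain ⟨p, hp, q, hq, heq⟩ := (mem_grp_iff A _).mp h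
      exact ⟨p, hp, q, hq, fun _ => heq⟩
    · exact ⟨0, zero_mem _, 0, zero_mem _, fun h' => absurd h' h⟩
  choose p hpA q hqA hpqeq using hpq
  set k : Fin m → ℕ := ∑ ρ : ι → Fin N, q ρ with hk
  have hkA : k ∈ A := AddSubmonoid.sum_mem A (fun ρ _ => hqA ρ)
  refine ⟨ntz b₀ - ntz k, sub_mem (ntz_mem_grp hb₀B) (ntz_mem_grp (hAB hkA)), ?_, ?_⟩
  · -- main claim
    intro b hbB hbg
    obtain ⟨a, haA, ρ, hρ, hbeq⟩ := hdec b hbB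
    set ρ' : ι → Fin N := fun i => ⟨ρ i, hρ i⟩ with hρ'
    have hΦρ : Φ ρ' = ∑ i, ρ i • e i := rfl
    have E2 : ntz b = ntz a + ntz (Φ ρ') := by rw [hΦρ, hbeq, ntz_add]
    have h1 : -(ntz b) + ntz b₀ ∈ grp A :=
      (QuotientAddGroup.eq ).mp (hbg.trans hb₀g.symm)
    have h2 : ntz a ∈ grp A := ntz_mem_grp haA
    have hcoset : ntz (Φ ρ') - ntz b₀ ∈ grp A := by
      have heq : ntz (Φ ρ') - ntz b₀ = -(-(ntz b) + ntz b₀) - ntz a := by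
        rw [E2]; ring
      rw [heq]; exact sub_mem (neg_mem h1) h2
    have E1 : ntz (Φ ρ') - ntz b₀ = ntz (p ρ') - ntz (q ρ') := hpqeq ρ' hcoset
    have E3 : ntz k = ntz (q ρ') + ntz (∑ x ∈ Finset.univ.erase ρ', q x) := by
      rw [← ntz_add, hk]
      exact congrArg ntz (Finset.add_sum_erase _ q (Finset.mem_univ ρ')).symm
    refine ⟨a + p ρ' + ∑ x ∈ Finset.univ.erase ρ', q x,
      add_mem (add_mem haA (hpA ρ'))
        (AddSubmonoid.sum_mem A (fun x _ => hqA x)), ?_⟩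
    rw [ntz_add, ntz_add]
    linear_combination E2 + E1 + E3
  · -- ideal property
    rintro x ⟨b, hbB, hbg, rfl⟩ a haA
    refine ⟨b + a, add_mem hbB (hAB haA), ?_, by rw [ntz_add]; ring⟩
    have : (QuotientAddGroup.mk (ntz (b + a)) : (Fin m → ℤ) ⧸ grp A)
        = QuotientAddGroup.mk (ntz b) := by
      rw [QuotientAddGroup.eq, ntz_add]
      have heq : -(ntz b + ntz a) + ntz b = -(ntz a) := by ring
      rw [heq]
      exact neg_mem (ntz_mem_grp haA)
    exact this.trans hbg
end

section
/- Let A ⊆ B be positive affine semigroups in ℕ^m, and define the divisibility preorder on B by x ≤ y if and only if there exists z ∈ B with x + z = y. Then for x, y ∈ B_A one has x ≤ y if and only if y − x ∈ B_A. -/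
open scoped BigOperators

/-- Let `A ⊆ B` be positive affine semigroups in `ℕ^m`, with the
divisibility preorder on `B`: `x ≤ y` iff there is `z ∈ B` with `x + z = y`.
Then for `x, y ∈ B_A` one has `x ≤ y` if and only if `y − x ∈ B_A` (the difference
taken in `ℤ^m`; membership in `B_A` includes `y − x ∈ ℕ^m`). -/
theorem stmt8 {m : ℕ} (A B : AddSubmonoid (Fin m → ℕ)) (hAfg : A.FG) (hBfg : B.FG)
    (hAB : A ≤ B) (x y : Fin m → ℕ) (hx : x ∈ BA A B) (hy : y ∈ BA A B) :
    (∃ z ∈ B, x + z = y) ↔ ∃ w ∈ BA A B, ntz y - ntz x = ntz w := by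
  constructor
  · rintro ⟨z, hz, hxz⟩
    refine ⟨z, ⟨hz, ?_⟩, ?_⟩
    · rintro ⟨b, hb, a, ha, ha0, hzba⟩
      exact hy.2 ⟨x + b, B.add_mem hx.1 hb, a, ha, ha0, by rw [← hxz, hzba, add_assoc]⟩
    · funext i
      simp [ntz, ← hxz, Pi.add_apply]
  · rintro ⟨w, hw, hyx⟩
    refine ⟨w, hw.1, ?_⟩
    funext i
    have := congrFun hyx i
    simp only [ntz, Pi.sub_apply] at this
    have : (y i : ℤ) = x i + w i := by linarith
    exact_mod_cast this.symm
end
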